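/- arXiv:2012.08350 — 2 statements merged into one kernel-verified Lean document; each statement's English description precedes it below -/
import Mathlib

section
/- Let G(x) = -(1/2)e^{-|x|}. For any f ∈ L¹(ℝ) ∩ L^∞(ℝ) and any x₁ ≤ x₂ in ℝ, one has |[G*f]_x(x₂) - [G*f]_x(x₁)| ≤ (1/2)(1 - e^{x₁-x₂}) ∫_{ℝ \ [x₁,x₂]} |f(z)| dz + ∫_{[x₁,x₂]} |f(z)| dz. -/
open MeasureTheory Set Real

lemma measurable_realSign : Measurable Real.sign := by
  unfold Real.sign
  exact Measurable.ite (measurableSet_lt measurable_id measurable_const) measurable_const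
    (Measurable.ite (measurableSet_lt measurable_const measurable_id) measurable_const
      measurable_const)

lemma Kabs (x y : ℝ) : |(1/2) * Real.sign (x - y) * Real.exp (-|x - y|)| ≤ 1/2 := by
  have h1 : |Real.sign (x - y)| ≤ 1 := by
    rcases Real.sign_apply_eq (x - y) with h | h | h <;> rw [h] <;> norm_num
  have h2 : Real.exp (-|x - y|) ≤ 1 := Real.exp_le_one_iff.mpr (neg_nonpos.mpr (abs_nonneg _))
  have h3 : (0:ℝ) < Real.exp (-|x - y|) := Real.exp_pos _
  rw [abs_mul, abs_mul, abs_of_pos h3]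
  calc |(1:ℝ)/2| * |Real.sign (x - y)| * Real.exp (-|x-y|) ≤ (1/2) * 1 * 1 := by
        apply mul_le_mul _ h2 h3.le (by norm_num)
        rw [abs_of_pos]; · nlinarith
        norm_num
    _ = 1/2 := by norm_num

lemma Kint (x : ℝ) (f : ℝ → ℝ) (hf : Integrable f) :
    Integrable (fun y => (1/2) * Real.sign (x - y) * Real.exp (-|x - y|) * f y) := by
  apply hf.bdd_mul (c := 1/2)
  · apply AEStronglyMeasurable.mul
    · exact ((measurable_realSign.comp (measurable_const.sub measurable_id)).const_mul _).aestronglyMeasurable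
    · exact (Real.measurable_exp.comp ((measurable_const.sub measurable_id).abs.neg)).aestronglyMeasurable
  · exact Filter.Eventually.of_forall fun y => by rw [Real.norm_eq_abs]; exact Kabs x y

lemma Kdiff_out {x₁ x₂ y : ℝ} (hx : x₁ ≤ x₂) (hy : y ∉ Set.Icc x₁ x₂) :
    |(1/2) * Real.sign (x₂ - y) * Real.exp (-|x₂ - y|)
      - (1/2) * Real.sign (x₁ - y) * Real.exp (-|x₁ - y|)|
    ≤ (1/2) * (1 - Real.exp (x₁ - x₂)) := by
  rw [Set.mem_Icc, not_and_or, not_le, not_le] at hy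
  rcases hy with hy | hy
  · -- y < x₁ ≤ x₂
    have h1 : 0 < x₁ - y := by linarith
    have h2 : 0 < x₂ - y := by linarith
    rw [Real.sign_of_pos h1, Real.sign_of_pos h2, abs_of_pos h1, abs_of_pos h2]
    have e1 : Real.exp (-(x₂ - y)) = Real.exp (-(x₁ - y)) * Real.exp (x₁ - x₂) := by
      rw [← Real.exp_add]; ring_nf
    have e2 : Real.exp (-(x₁ - y)) ≤ 1 := Real.exp_le_one_iff.mpr (by linarith)
    have e3 : Real.exp (x₁ - x₂) ≤ 1 := Real.exp_le_one_iff.mpr (by linarith)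
    have e4 : 0 < Real.exp (-(x₁ - y)) := Real.exp_pos _
    rw [abs_le]
    constructor <;> nlinarith
  · have h1 : x₁ - y < 0 := by linarith
    have h2 : x₂ - y < 0 := by linarith
    rw [Real.sign_of_neg h1, Real.sign_of_neg h2, abs_of_neg h1, abs_of_neg h2]
    have e1 : Real.exp (-(-(x₁ - y))) = Real.exp (-(-(x₂ - y))) * Real.exp (x₁ - x₂) := by
      rw [← Real.exp_add]; ring_nf
    have e2 : Real.exp (-(-(x₂ - y))) ≤ 1 := Real.exp_le_one_iff.mpr (by linarith)
    have e3 : Real.exp (x₁ - x₂) ≤ 1 := Real.exp_le_one_iff.mpr (by linarith)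
    have e4 : 0 < Real.exp (-(-(x₂ - y))) := Real.exp_pos _
    rw [abs_le]
    constructor <;> nlinarith

/-- For `G(x) = -(1/2) e^{-|x|}` with `G'(x) = (1/2) sign(x) e^{-|x|}`,
`f ∈ L¹(ℝ) ∩ L∞(ℝ)` and `x₁ ≤ x₂`,
`|[G*f]_x(x₂) - [G*f]_x(x₁)| ≤ (1/2)(1 - e^{x₁-x₂}) ∫_{ℝ∖[x₁,x₂]} |f| + ∫_{[x₁,x₂]} |f|`. -/
theorem poisson_kernel_deriv_convolution_difference_bound
    (f : ℝ → ℝ) (hf : Integrable f) (hb : ∃ C, ∀ᵐ x, |f x| ≤ C)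
    (x₁ x₂ : ℝ) (hx : x₁ ≤ x₂) :
    |(∫ y, (1/2) * Real.sign (x₂ - y) * Real.exp (-|x₂ - y|) * f y) -
      (∫ y, (1/2) * Real.sign (x₁ - y) * Real.exp (-|x₁ - y|) * f y)|
    ≤ (1/2) * (1 - Real.exp (x₁ - x₂)) * (∫ z in (Set.Icc x₁ x₂)ᶜ, |f z|) +
        ∫ z in Set.Icc x₁ x₂, |f z| := by
  set g : ℝ → ℝ := fun y =>
    (1/2) * Real.sign (x₂ - y) * Real.exp (-|x₂ - y|) * f y
      - (1/2) * Real.sign (x₁ - y) * Real.exp (-|x₁ - y|) * f y with hg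
  have hgi : Integrable g := (Kint x₂ f hf).sub (Kint x₁ f hf)
  rw [← integral_sub (Kint x₂ f hf) (Kint x₁ f hf)]
  have h1 : |∫ y, g y| ≤ ∫ y, |g y| := by simpa [Real.norm_eq_abs] using norm_integral_le_integral_norm g
  refine le_trans h1 ?_
  rw [← integral_add_compl (measurableSet_Icc (a := x₁) (b := x₂)) hgi.abs]
  rw [add_comm]
  gcongr ?_ + ?_
  · -- complement part
    have hc : 0 ≤ (1/2) * (1 - Real.exp (x₁ - x₂)) := by
      have := Real.exp_le_one_iff.mpr (show x₁ - x₂ ≤ 0 by linarith)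
      nlinarith
    calc ∫ y in (Set.Icc x₁ x₂)ᶜ, |g y|
        ≤ ∫ y in (Set.Icc x₁ x₂)ᶜ, (1/2) * (1 - Real.exp (x₁ - x₂)) * |f y| := by
          apply setIntegral_mono_on (hgi.abs.integrableOn)
            ((hf.abs.integrableOn).const_mul _) (measurableSet_Icc.compl)
          intro y hy
          have : g y = ((1/2) * Real.sign (x₂ - y) * Real.exp (-|x₂ - y|)
            - (1/2) * Real.sign (x₁ - y) * Real.exp (-|x₁ - y|)) * f y := by
            rw [hg]; ring
          rw [this, abs_mul]
          exact mul_le_mul_of_nonneg_right (Kdiff_out hx hy) (abs_nonneg _)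
      _ = (1/2) * (1 - Real.exp (x₁ - x₂)) * ∫ z in (Set.Icc x₁ x₂)ᶜ, |f z| := by
          rw [integral_const_mul]
  · -- Icc part
    apply setIntegral_mono_on (hgi.abs.integrableOn) (hf.abs.integrableOn) measurableSet_Icc
    intro y _
    have : g y = ((1/2) * Real.sign (x₂ - y) * Real.exp (-|x₂ - y|)
      - (1/2) * Real.sign (x₁ - y) * Real.exp (-|x₁ - y|)) * f y := by
      rw [hg]; ring
    rw [this, abs_mul]
    have hb : |(1/2) * Real.sign (x₂ - y) * Real.exp (-|x₂ - y|)
      - (1/2) * Real.sign (x₁ - y) * Real.exp (-|x₁ - y|)| ≤ 1 := by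
      calc _ ≤ |(1/2) * Real.sign (x₂ - y) * Real.exp (-|x₂ - y|)|
          + |(1/2) * Real.sign (x₁ - y) * Real.exp (-|x₁ - y|)| := abs_sub _ _
        _ ≤ 1/2 + 1/2 := add_le_add (Kabs _ _) (Kabs _ _)
        _ = 1 := by norm_num
    nlinarith [abs_nonneg (f y)]
end

section
/- Let f : ℝ → ℝ satisfy the one-sided Lipschitz condition f(y) - f(x) ≤ C·(y - x) for all x < y, with C > 0, and suppose f ∈ L¹(ℝ) with ‖f‖_{L¹} ≤ M. Then ‖f‖_{L^∞} ≤ √(2CM). -/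
open MeasureTheory Set Real

lemma tri_integral (a C u v : ℝ) (hC : 0 < C) (hv : v = u + a / C) :
    ∫ t in u..v, (a - C * (v - t)) = a ^ 2 / (2 * C) := by
  have h1 : ∀ t : ℝ, a - C * (v - t) = (a - C * v) + C * t := by intro t; ring
  simp only [h1]
  rw [intervalIntegral.integral_add intervalIntegrable_const
    ((intervalIntegral.intervalIntegrable_id).const_mul C),
    intervalIntegral.integral_const,
    intervalIntegral.integral_const_mul, integral_id]
  subst hv
  simp only [smul_eq_mul]
  field_simp [hC.ne']
  ring

lemma tri_integral' (a C u v : ℝ) (hC : 0 < C) (hv : v = u + a / C) :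
    ∫ t in u..v, (a - C * (t - u)) = a ^ 2 / (2 * C) := by
  have h1 : ∀ t : ℝ, a - C * (t - u) = (a + C * u) + (-C) * t := by intro t; ring
  simp only [h1]
  rw [intervalIntegral.integral_add intervalIntegrable_const
    ((intervalIntegral.intervalIntegrable_id).const_mul (-C)),
    intervalIntegral.integral_const,
    intervalIntegral.integral_const_mul, integral_id]
  subst hv
  field_simp [hC.ne']
  ring_nf
  field_simp
  ring

/-- If `f ∈ L¹(ℝ)` with `‖f‖_{L¹} ≤ M` satisfies the one-sided
Lipschitz (Oleinik) condition `f(y) - f(x) ≤ C(y-x)` for all `x < y`, `C > 0`,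
then `‖f‖_{L∞} ≤ √(2CM)`. -/
theorem oneSided_lipschitz_Linfty_bound
    (f : ℝ → ℝ) (C M : ℝ) (hC : 0 < C)
    (hf : Integrable f) (hM : (∫ x, |f x|) ≤ M)
    (hOleinik : ∀ x y : ℝ, x < y → f y - f x ≤ C * (y - x)) :
    ∀ x : ℝ, |f x| ≤ Real.sqrt (2 * C * M) := by
  intro x₀
  set a : ℝ := |f x₀| with ha
  have ha0 : 0 ≤ a := abs_nonneg _
  have hM0 : 0 ≤ M := le_trans (integral_nonneg fun x => abs_nonneg _) hM
  -- key: a^2/(2C) ≤ M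
  have key : a ^ 2 / (2 * C) ≤ M := by
    rcases eq_or_lt_of_le ha0 with h0 | hapos
    · rw [← h0]; simpa using hM0
    have haC : 0 < a / C := div_pos hapos hC
    rcases le_or_gt 0 (f x₀) with hpos | hneg
    · -- f x₀ = a ≥ 0, triangle on the left: [x₀ - a/C, x₀]
      have hfa : f x₀ = a := by rw [ha, abs_of_nonneg hpos]
      set u : ℝ := x₀ - a / C with hu
      have huv : u ≤ x₀ := by simp [hu]; positivity
      have hbound : ∀ t ∈ Ioc u x₀, a - C * (x₀ - t) ≤ |f t| := by
        intro t ht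
        rcases eq_or_lt_of_le ht.2 with h | h
        · subst h; rw [sub_self, mul_zero, sub_zero, ← ha]
        · have := hOleinik t x₀ h
          have : a - C * (x₀ - t) ≤ f t := by rw [← hfa]; linarith
          exact this.trans (le_abs_self _)
      have hint1 : (∫ t in u..x₀, (a - C * (x₀ - t))) = a ^ 2 / (2 * C) :=
        tri_integral a C u x₀ hC (by rw [hu]; ring)
      have hint2 : (∫ t in u..x₀, (a - C * (x₀ - t)))
          = ∫ t in Ioc u x₀, (a - C * (x₀ - t)) := by
        rw [intervalIntegral.integral_of_le huv]
      have hmono : (∫ t in Ioc u x₀, (a - C * (x₀ - t))) ≤ ∫ t in Ioc u x₀, |f t| := by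
        apply setIntegral_mono_on
        · exact ((continuous_const.sub (continuous_const.mul (continuous_const.sub continuous_id))).integrableOn_Ioc)
        · exact hf.abs.integrableOn
        · exact measurableSet_Ioc
        · exact hbound
      have hle : (∫ t in Ioc u x₀, |f t|) ≤ ∫ x, |f x| :=
        setIntegral_le_integral hf.abs (Filter.Eventually.of_forall fun x => abs_nonneg _)
      linarith [hint1, hint2, hmono, hle, hM]
    · -- f x₀ = -a < 0, triangle on the right: [x₀, x₀ + a/C]
      have hfa : f x₀ = -a := by rw [ha, abs_of_neg hneg]; ring
      set v : ℝ := x₀ + a / C with hv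
      have huv : x₀ ≤ v := by simp [hv]; positivity
      have hbound : ∀ t ∈ Ioc x₀ v, a - C * (t - x₀) ≤ |f t| := by
        intro t ht
        have h := hOleinik x₀ t ht.1
        have h2 : f t ≤ -(a - C * (t - x₀)) := by rw [hfa] at h; linarith
        calc a - C * (t - x₀) ≤ -(f t) := by linarith
          _ ≤ |f t| := neg_le_abs _
      have hint1 : (∫ t in x₀..v, (a - C * (t - x₀))) = a ^ 2 / (2 * C) :=
        tri_integral' a C x₀ v hC hv
      have hint2 : (∫ t in x₀..v, (a - C * (t - x₀)))
          = ∫ t in Ioc x₀ v, (a - C * (t - x₀)) := by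
        rw [intervalIntegral.integral_of_le huv]
      have hmono : (∫ t in Ioc x₀ v, (a - C * (t - x₀))) ≤ ∫ t in Ioc x₀ v, |f t| := by
        apply setIntegral_mono_on
        · exact ((continuous_const.sub (continuous_const.mul (continuous_id.sub continuous_const))).integrableOn_Ioc)
        · exact hf.abs.integrableOn
        · exact measurableSet_Ioc
        · exact hbound
      have hle : (∫ t in Ioc x₀ v, |f t|) ≤ ∫ x, |f x| :=
        setIntegral_le_integral hf.abs (Filter.Eventually.of_forall fun x => abs_nonneg _)
      linarith [hint1, hint2, hmono, hle, hM]
  -- conclude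
  have hsq : a ^ 2 ≤ 2 * C * M := by
    have h2C : 0 < 2 * C := by linarith
    calc a ^ 2 = a ^ 2 / (2 * C) * (2 * C) := by field_simp
      _ ≤ M * (2 * C) := by apply mul_le_mul_of_nonneg_right key h2C.le
      _ = 2 * C * M := by ring
  exact (Real.le_sqrt ha0 (mul_nonneg (by linarith) hM0)).mpr hsq
end
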